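/- Let V be a finite type with n = |V|, let F be a nonempty superset-closed family of finsets of V, and let t be a natural number with t ≤ n. Then the minimum cardinality of a member of F is at most n − t if and only if there is an induced copy of the hypercube Q_t in the TAR graph of F, i.e., an injective map f from Finset (Fin t) into F such that f(A) and f(B) are adjacent in the TAR graph of F if and only if the symmetric difference A △ B has exactly one element. -/

import Mathlib

variable {V : Type*} [Fintype V] [DecidableEq V]

/-- A family of finsets is superset-closed if it is closed under taking supersets. -/
def SupersetClosed (F : Finset (Finset V)) : Prop :=
  ∀ ⦃S T : Finset V⦄, S ∈ F → S ⊆ T → T ∈ F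

/-- A minimal member of a family: a member no proper subset of which is a member. -/
def IsMinimalMem (F : Finset (Finset V)) (M : Finset V) : Prop :=
  M ∈ F ∧ ∀ M' : Finset V, M' ⊂ M → M' ∉ F

/-- The TAR graph of a family of finsets: vertices are the members of the family,
two members being adjacent iff their symmetric difference has exactly one element. -/
def TARGraph (F : Finset (Finset V)) : SimpleGraph {S : Finset V // S ∈ F} where
  Adj S T := (symmDiff S.1 T.1).card = 1
  symm := ⟨fun S T h => by
    change (symmDiff S.1 T.1).card = 1 at h
    change (symmDiff T.1 S.1).card = 1
    rwa [symmDiff_comm] at h⟩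
  loopless := ⟨fun S h => by
    change (symmDiff S.1 S.1).card = 1 at h
    simp [symmDiff_self] at h⟩

instance (F : Finset (Finset V)) : DecidableRel (TARGraph F).Adj :=
  fun S T => inferInstanceAs (Decidable ((symmDiff S.1 T.1).card = 1))

private lemma symmDiff_cancel_aux {α : Type*} [DecidableEq α] (p q r : Finset α) :
    symmDiff (symmDiff p q) (symmDiff p r) = symmDiff q r := by
  ext x
  simp only [Finset.mem_symmDiff]
  tauto

private lemma symmDiff_singleton_not_mem {α : Type*} [DecidableEq α]
    (s : Finset α) (k : α) (hk : k ∉ s) : symmDiff s {k} = insert k s := by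
  ext x
  by_cases hx : x = k
  · subst hx; simp [Finset.mem_symmDiff, hk]
  · simp only [Finset.mem_symmDiff, Finset.mem_singleton, Finset.mem_insert, hx]
    tauto

private lemma symmDiff_singleton_mem {α : Type*} [DecidableEq α]
    (s : Finset α) (k : α) (hk : k ∈ s) : symmDiff s {k} = s.erase k := by
  ext x
  by_cases hx : x = k
  · subst hx; simp [Finset.mem_symmDiff, hk]
  · simp only [Finset.mem_symmDiff, Finset.mem_singleton, Finset.mem_erase, hx]
    tauto

theorem stmt3 (F : Finset (Finset V)) (hne : F.Nonempty) (hsup : SupersetClosed F)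
    (t : ℕ) (ht : t ≤ Fintype.card V)
    (x : ℕ) (hx : IsLeast {k : ℕ | ∃ S ∈ F, S.card = k} x) :
    x ≤ Fintype.card V - t ↔
      ∃ f : Finset (Fin t) → {S : Finset V // S ∈ F},
        Function.Injective f ∧
        ∀ A B : Finset (Fin t),
          (TARGraph F).Adj (f A) (f B) ↔ (symmDiff A B).card = 1 := by
  constructor
  · -- forward direction
    intro hle
    obtain ⟨S, hS, hScard⟩ := hx.1
    have hScard' : S.card ≤ Fintype.card V - t := hScard ▸ hle
    have hcompl : t ≤ (Finset.univ \ S).card := by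
      rw [Finset.card_sdiff_of_subset (Finset.subset_univ S), Finset.card_univ]
      omega
    obtain ⟨T, hTsub, hTcard⟩ := Finset.exists_subset_card_eq hcompl
    set eqv := T.equivFinOfCardEq hTcard with heqv
    set e : Fin t → V := fun i => (eqv.symm i : V) with he
    have heinj : Function.Injective e := fun i j h => by
      apply eqv.symm.injective; exact Subtype.val_injective h
    have heS : ∀ i, e i ∉ S := fun i => by
      have : e i ∈ Finset.univ \ S := hTsub (eqv.symm i).2
      simpa using this
    refine ⟨fun A => ⟨S ∪ A.image e, hsup hS Finset.subset_union_left⟩, ?_, ?_⟩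
    · intro A B hAB
      have h1 : S ∪ A.image e = S ∪ B.image e := congrArg Subtype.val hAB
      have h2 : A.image e = B.image e := by
        ext v
        constructor
        · intro hv
          obtain ⟨i, _, rfl⟩ := Finset.mem_image.1 hv
          have : e i ∈ S ∪ B.image e := h1 ▸ Finset.mem_union_right _ hv
          rcases Finset.mem_union.1 this with h | h
          · exact absurd h (heS i)
          · exact h
        · intro hv
          obtain ⟨i, _, rfl⟩ := Finset.mem_image.1 hv
          have : e i ∈ S ∪ A.image e := h1 ▸ Finset.mem_union_right _ hv
          rcases Finset.mem_union.1 this with h | h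
          · exact absurd h (heS i)
          · exact h
      exact Finset.image_injective heinj h2
    · intro A B
      have hsd : symmDiff (S ∪ A.image e) (S ∪ B.image e)
          = symmDiff (A.image e) (B.image e) := by
        ext v
        have h1 : v ∈ A.image e → v ∉ S := by
          intro hv; obtain ⟨i, _, rfl⟩ := Finset.mem_image.1 hv; exact heS i
        have h2 : v ∈ B.image e → v ∉ S := by
          intro hv; obtain ⟨i, _, rfl⟩ := Finset.mem_image.1 hv; exact heS i
        simp only [Finset.mem_symmDiff, Finset.mem_union]
        tauto
      show (symmDiff (S ∪ A.image e) (S ∪ B.image e)).card = 1 ↔ _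
      rw [hsd, ← Finset.image_symmDiff _ _ heinj,
        Finset.card_image_of_injective _ heinj]
  · -- backward direction
    rintro ⟨f, hfinj, hfadj⟩
    set g : Finset (Fin t) → Finset V := fun A => (f A).1 with hg
    have hginj : Function.Injective g := fun A B h =>
      hfinj (Subtype.val_injective h)
    have hgadj : ∀ A B, (symmDiff (g A) (g B)).card = 1 ↔ (symmDiff A B).card = 1 :=
      fun A B => hfadj A B
    have hsingle : ∀ i : Fin t, ∃ v, symmDiff (g ∅) (g {i}) = {v} := by
      intro i
      apply Finset.card_eq_one.1
      rw [hgadj]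
      have : symmDiff (∅ : Finset (Fin t)) {i} = {i} := by
        ext k; simp [Finset.mem_symmDiff]
      rw [this, Finset.card_singleton]
    choose e hev using hsingle
    have hsingle' : ∀ i : Fin t, g {i} = symmDiff (g ∅) {e i} := by
      intro i
      rw [← hev i, symmDiff_symmDiff_cancel_left]
    have heinj : Function.Injective e := by
      intro i j h
      by_contra hij
      apply hij
      have h2 : g {i} = g {j} := by rw [hsingle', hsingle', h]
      have := hginj h2
      simpa using this
    -- the key structural lemma
    have key : ∀ A : Finset (Fin t), g A = symmDiff (g ∅) (A.image e) := by
      intro A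
      induction A using Finset.strongInduction with
      | _ A ih =>
        rcases Finset.eq_empty_or_nonempty A with rfl | ⟨i, hi⟩
        · rw [Finset.image_empty]
          ext v; simp [Finset.mem_symmDiff]
        rcases eq_or_ne A {i} with rfl | hA1
        · simpa using hsingle' i
        obtain ⟨j, hj, hji⟩ : ∃ j ∈ A, j ≠ i := by
          by_contra h
          push_neg at h
          exact hA1 (Finset.eq_singleton_iff_unique_mem.2 ⟨hi, h⟩)
        set A1 := A.erase i with hA1def
        set A2 := A.erase j with hA2def
        set A0 := A1.erase j with hA0def
        have hiA1 : i ∉ A1 := Finset.notMem_erase _ _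
        have hjA1 : j ∈ A1 := Finset.mem_erase.2 ⟨hji, hj⟩
        have ihA1 : g A1 = symmDiff (g ∅) (A1.image e) :=
          ih A1 (Finset.erase_ssubset hi)
        have ihA2 : g A2 = symmDiff (g ∅) (A2.image e) :=
          ih A2 (Finset.erase_ssubset hj)
        have ihA0 : g A0 = symmDiff (g ∅) (A0.image e) :=
          ih A0 ((Finset.erase_ssubset hjA1).trans (Finset.erase_ssubset hi))
        have hAA1 : symmDiff A A1 = {i} := by
          rw [hA1def, symmDiff_comm, symmDiff_eq_sup_sdiff_inf]
          rw [Finset.sup_eq_union, Finset.inf_eq_inter]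
          rw [Finset.union_eq_right.2 (Finset.erase_subset _ _),
          Finset.inter_eq_left.2 (Finset.erase_subset _ _)]
          exact Finset.sdiff_erase_self hi
        obtain ⟨c, hc⟩ : ∃ c, symmDiff (g A) (g A1) = {c} := by
          apply Finset.card_eq_one.1
          rw [hgadj, hAA1]
          simp
        have hgA : g A = symmDiff (g A1) {c} := by
          rw [← hc, symmDiff_comm (g A) (g A1), symmDiff_symmDiff_cancel_left]
        have hgA' : g A = symmDiff (g ∅) (symmDiff (A1.image e) {c}) := by
          rw [hgA, ihA1, symmDiff_assoc]
        -- adjacency between A and A2 pins down c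
        have hAA2 : symmDiff A A2 = {j} := by
          rw [hA2def, symmDiff_comm, symmDiff_eq_sup_sdiff_inf]
          rw [Finset.sup_eq_union, Finset.inf_eq_inter]
          rw [Finset.union_eq_right.2 (Finset.erase_subset _ _),
          Finset.inter_eq_left.2 (Finset.erase_subset _ _)]
          exact Finset.sdiff_erase_self hj
        have hA1A2 : symmDiff (A1.image e) (A2.image e) = {e i, e j} := by
          rw [← Finset.image_symmDiff _ _ heinj]
          have : symmDiff A1 A2 = {i, j} := by
            ext k
            simp only [Finset.mem_symmDiff, Finset.mem_erase, Finset.mem_insert,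
              Finset.mem_singleton, hA1def, hA2def]
            constructor
            · rintro (⟨⟨hki, hk⟩, h⟩ | ⟨⟨hkj, hk⟩, h⟩)
              · by_contra hor; push_neg at hor
                exact h ⟨hor.2, hk⟩
              · by_contra hor; push_neg at hor
                exact h ⟨hor.1, hk⟩
            · rintro (rfl | rfl)
              · exact Or.inr ⟨⟨Ne.symm hji, hi⟩, fun h => h.1 rfl⟩
              · exact Or.inl ⟨⟨hji, hj⟩, fun h => h.1 rfl⟩
          rw [this]
          simp [Finset.image_insert]
        have hAA2card : (symmDiff (g A) (g A2)).card = 1 := by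
          rw [hgadj, hAA2]; simp
        have hstep : symmDiff (g A) (g A2) = symmDiff {c} {e i, e j} := by
          rw [hgA', ihA2, symmDiff_cancel_aux, symmDiff_comm (A1.image e) {c},
            symmDiff_assoc, hA1A2]
        rw [hstep] at hAA2card
        have heij : e i ≠ e j := fun h => hji (heinj h).symm
        -- c must be e i or e j
        have hcor : c = e i ∨ c = e j := by
          by_contra hcon
          push_neg at hcon
          have hset : symmDiff ({c} : Finset V) {e i, e j} = {c, e i, e j} := by
            ext y
            simp only [Finset.mem_symmDiff, Finset.mem_singleton, Finset.mem_insert]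
            constructor
            · rintro (⟨rfl, _⟩ | ⟨h, _⟩)
              · exact Or.inl rfl
              · tauto
            · rintro (rfl | rfl | rfl)
              · exact Or.inl ⟨rfl, by tauto⟩
              · exact Or.inr ⟨Or.inl rfl, fun h => hcon.1 h.symm⟩
              · exact Or.inr ⟨Or.inr rfl, fun h => hcon.2 h.symm⟩
          rw [hset] at hAA2card
          have : ({c, e i, e j} : Finset V).card = 3 := by
            rw [Finset.card_insert_of_notMem (by simp [hcon.1, hcon.2]),
              Finset.card_insert_of_notMem (by simp [heij]), Finset.card_singleton]
          omega
        -- rule out c = e j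
        have hcnej : c ≠ e j := by
          rintro rfl
          have hA1j : symmDiff (A1.image e) {e j} = A0.image e := by
            have h1 : ({e j} : Finset V) = Finset.image e {j} := by simp
            rw [h1, ← Finset.image_symmDiff _ _ heinj,
              symmDiff_singleton_mem _ _ hjA1]
          have : g A = g A0 := by
            rw [hgA', hA1j, ← ihA0]
          have hAeq := hginj this
          have : i ∈ A0 := hAeq ▸ hi
          rw [hA0def, hA1def] at this
          exact (Finset.mem_erase.1 (Finset.mem_of_mem_erase this)).1 rfl
        have hcei : c = e i := hcor.resolve_right hcnej
        subst hcei
        rw [hgA']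
        congr 1
        have h1 : ({e i} : Finset V) = Finset.image e {i} := by simp
        rw [h1, ← Finset.image_symmDiff _ _ heinj,
          symmDiff_singleton_not_mem _ _ hiA1, Finset.insert_erase hi]
    -- conclude: pick the subcube vertex avoiding all e i
    set A0 : Finset (Fin t) := Finset.univ.filter (fun i => e i ∈ g ∅) with hA0
    have hM := key A0
    have hnotin : ∀ i : Fin t, e i ∉ g A0 := by
      intro i
      rw [hM]
      simp only [Finset.mem_symmDiff, not_or, not_and, not_not]
      constructor
      · intro hig
        apply Finset.mem_image_of_mem
        rw [hA0]
        simp [hig]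
      · intro him
        obtain ⟨j, hjmem, hje⟩ := Finset.mem_image.1 him
        have : j = i := heinj hje
        subst this
        rw [hA0] at hjmem
        exact (Finset.mem_filter.1 hjmem).2
    have hsub : g A0 ⊆ Finset.univ \ Finset.univ.image e := by
      intro v hv
      rw [Finset.mem_sdiff]
      refine ⟨Finset.mem_univ v, ?_⟩
      intro hvimg
      obtain ⟨i, _, rfl⟩ := Finset.mem_image.1 hvimg
      exact hnotin i hv
    have hcardbound : (g A0).card ≤ Fintype.card V - t := by
      calc (g A0).card ≤ (Finset.univ \ Finset.univ.image e).card :=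
            Finset.card_le_card hsub
        _ = Fintype.card V - t := by
            rw [Finset.card_sdiff_of_subset (Finset.subset_univ _), Finset.card_univ,
              Finset.card_image_of_injective _ heinj, Finset.card_univ,
              Fintype.card_fin]
    exact le_trans (hx.2 ⟨g A0, (f A0).2, rfl⟩) hcardbound
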